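/- Let R be a commutative ring, let M and N be R-modules, and consider the Koszul-signed (super) graded tensor product Λ(M) ⊗' Λ(N) of the exterior algebras of M and N, in which homogeneous elements multiply by the rule (a ⊗' b)·(c ⊗' d) = (−1)^{|b||c|} (a·c) ⊗' (b·d). Let x₁,…,xₙ ∈ M and y₁,…,yₙ ∈ N, and set s := Σᵢ ι(xᵢ) ⊗' ι(yᵢ), where ι denotes the canonical inclusion of the module into its exterior algebra. Then s⁴ = 24 · Σ_{i<j<k<l} (ι(xᵢ)·ι(xⱼ)·ι(x_k)·ι(x_l)) ⊗' (ι(yᵢ)·ι(yⱼ)·ι(y_k)·ι(y_l)). -/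

import Mathlib

open TensorProduct ExteriorAlgebra

section helper
open Finset
variable {A : Type*} [Ring A] {κ : Type*} [LinearOrder κ]
private lemma two_el (u S : A) (hu : u * u = 0) (hcm : u * S = S * u) :
    (u + S) ^ 2 = S ^ 2 + 2 • (S * u) ∧
    (u + S) ^ 3 = S ^ 3 + 3 • (S ^ 2 * u) ∧
    (u + S) ^ 4 = S ^ 4 + 4 • (S ^ 3 * u) := by
  have h1 : ∀ x, u * (S * x) = S * (u * x) := fun x => by rw [← mul_assoc, hcm, mul_assoc]
  have hu0 : ∀ x, u * (u * x) = 0 := fun x => by rw [← mul_assoc, hu, zero_mul]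
  refine ⟨?_, ?_, ?_⟩ <;>
  · simp only [pow_succ, pow_zero, one_mul, mul_add, add_mul, mul_assoc, hu, hcm, h1, hu0,
      mul_zero, zero_mul, add_zero, zero_add, smul_mul_assoc, smul_add]
    abel

variable (t : κ → A) (hc : ∀ i j, Commute (t i) (t j)) (ht : ∀ i, t i * t i = 0)

include hc ht

private lemma pow_two_aux (s : Finset κ) :
    (∑ i ∈ s, t i) ^ 2 = 2 • ∑ i ∈ s, ∑ j ∈ s.filter (i < ·), t i * t j := by
  classical
  induction s using Finset.induction_on_max with
  | empty => simp
  | insert a s has ih =>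
    have ha : a ∉ s := fun h => lt_irrefl a (has a h)
    have hfa : ∀ b : κ, a ∉ s.filter (b < ·) := fun b h => ha (mem_filter.1 h).1
    have hSa : Commute (t a) (∑ i ∈ s, t i) :=
      Commute.sum_right _ _ _ fun i _ => hc a i
    have hempty : (insert a s).filter (a < ·) = ∅ := by
      rw [filter_insert, if_neg (lt_irrefl a)]
      exact filter_eq_empty_iff.2 fun x hx => not_lt.2 (has x hx).le
    have hins : ∀ i ∈ s, (insert a s).filter (i < ·) = insert a (s.filter (i < ·)) :=
      fun i hi => by rw [filter_insert, if_pos (has i hi)]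
    set S := ∑ i ∈ s, t i with hS
    have hrow : ∀ i ∈ s, (∑ j ∈ (insert a s).filter (i < ·), t i * t j)
        = (∑ j ∈ s.filter (i < ·), t i * t j) + t i * t a := by
      intro i hi
      rw [hins i hi, sum_insert (hfa i), add_comm]
    have key : ∑ i ∈ insert a s, ∑ j ∈ (insert a s).filter (i < ·), t i * t j
        = (∑ i ∈ s, ∑ j ∈ s.filter (i < ·), t i * t j) + S * t a := by
      rw [sum_insert ha, hempty, sum_empty, zero_add, sum_congr rfl hrow,
        sum_add_distrib, ← sum_mul]
    obtain ⟨h2, -, -⟩ := two_el (t a) S (ht a) hSa.eq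
    rw [sum_insert ha, key, h2, ih, smul_add]

private lemma pow_three_aux (s : Finset κ) :
    (∑ i ∈ s, t i) ^ 3 =
      6 • ∑ i ∈ s, ∑ j ∈ s.filter (i < ·), ∑ k ∈ s.filter (j < ·), t i * t j * t k := by
  classical
  induction s using Finset.induction_on_max with
  | empty => simp
  | insert a s has ih =>
    have ha : a ∉ s := fun h => lt_irrefl a (has a h)
    have hfa : ∀ b : κ, a ∉ s.filter (b < ·) := fun b h => ha (mem_filter.1 h).1
    have hSa : Commute (t a) (∑ i ∈ s, t i) :=
      Commute.sum_right _ _ _ fun i _ => hc a i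
    have hempty : (insert a s).filter (a < ·) = ∅ := by
      rw [filter_insert, if_neg (lt_irrefl a)]
      exact filter_eq_empty_iff.2 fun x hx => not_lt.2 (has x hx).le
    have hins : ∀ i ∈ s, (insert a s).filter (i < ·) = insert a (s.filter (i < ·)) :=
      fun i hi => by rw [filter_insert, if_pos (has i hi)]
    set S := ∑ i ∈ s, t i with hS
    have hrow1 : ∀ i ∈ s, (∑ j ∈ (insert a s).filter (i < ·),
          ∑ k ∈ (insert a s).filter (j < ·), t i * t j * t k)
        = (∑ j ∈ s.filter (i < ·), ∑ k ∈ s.filter (j < ·), t i * t j * t k)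
          + (∑ j ∈ s.filter (i < ·), t i * t j) * t a := by
      intro i hi
      have hrow2 : ∀ j ∈ s.filter (i < ·),
          (∑ k ∈ (insert a s).filter (j < ·), t i * t j * t k)
          = (∑ k ∈ s.filter (j < ·), t i * t j * t k) + t i * t j * t a := by
        intro j hj
        rw [hins j (mem_filter.1 hj).1, sum_insert (hfa j), add_comm]
      rw [hins i hi, sum_insert (hfa i), hempty, sum_empty, zero_add,
        sum_congr rfl hrow2, sum_add_distrib, ← sum_mul]
    have key : ∑ i ∈ insert a s, ∑ j ∈ (insert a s).filter (i < ·),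
          ∑ k ∈ (insert a s).filter (j < ·), t i * t j * t k
        = (∑ i ∈ s, ∑ j ∈ s.filter (i < ·), ∑ k ∈ s.filter (j < ·), t i * t j * t k)
          + (∑ i ∈ s, ∑ j ∈ s.filter (i < ·), t i * t j) * t a := by
      rw [sum_insert ha, hempty, sum_empty, zero_add, sum_congr rfl hrow1,
        sum_add_distrib, ← sum_mul]
    obtain ⟨-, h3, -⟩ := two_el (t a) S (ht a) hSa.eq
    have hS2 : S ^ 2 = 2 • ∑ i ∈ s, ∑ j ∈ s.filter (i < ·), t i * t j := by
      rw [hS]; exact pow_two_aux t hc ht s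
    rw [sum_insert ha, key, h3, ih, hS2, smul_mul_assoc, smul_smul, smul_add]
    norm_num

lemma pow_four_aux (s : Finset κ) :
    (∑ i ∈ s, t i) ^ 4 =
      24 • ∑ i ∈ s, ∑ j ∈ s.filter (i < ·), ∑ k ∈ s.filter (j < ·),
        ∑ l ∈ s.filter (k < ·), t i * t j * t k * t l := by
  classical
  induction s using Finset.induction_on_max with
  | empty => simp
  | insert a s has ih =>
    have ha : a ∉ s := fun h => lt_irrefl a (has a h)
    have hfa : ∀ b : κ, a ∉ s.filter (b < ·) := fun b h => ha (mem_filter.1 h).1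
    have hSa : Commute (t a) (∑ i ∈ s, t i) :=
      Commute.sum_right _ _ _ fun i _ => hc a i
    have hempty : (insert a s).filter (a < ·) = ∅ := by
      rw [filter_insert, if_neg (lt_irrefl a)]
      exact filter_eq_empty_iff.2 fun x hx => not_lt.2 (has x hx).le
    have hins : ∀ i ∈ s, (insert a s).filter (i < ·) = insert a (s.filter (i < ·)) :=
      fun i hi => by rw [filter_insert, if_pos (has i hi)]
    set S := ∑ i ∈ s, t i with hS
    have hrow1 : ∀ i ∈ s, (∑ j ∈ (insert a s).filter (i < ·),
          ∑ k ∈ (insert a s).filter (j < ·), ∑ l ∈ (insert a s).filter (k < ·),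
            t i * t j * t k * t l)
        = (∑ j ∈ s.filter (i < ·), ∑ k ∈ s.filter (j < ·), ∑ l ∈ s.filter (k < ·),
            t i * t j * t k * t l)
          + (∑ j ∈ s.filter (i < ·), ∑ k ∈ s.filter (j < ·), t i * t j * t k) * t a := by
      intro i hi
      have hrow2 : ∀ j ∈ s.filter (i < ·),
          (∑ k ∈ (insert a s).filter (j < ·), ∑ l ∈ (insert a s).filter (k < ·),
            t i * t j * t k * t l)
          = (∑ k ∈ s.filter (j < ·), ∑ l ∈ s.filter (k < ·), t i * t j * t k * t l)
            + (∑ k ∈ s.filter (j < ·), t i * t j * t k) * t a := by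
        intro j hj
        have hrow3 : ∀ k ∈ s.filter (j < ·),
            (∑ l ∈ (insert a s).filter (k < ·), t i * t j * t k * t l)
            = (∑ l ∈ s.filter (k < ·), t i * t j * t k * t l) + t i * t j * t k * t a := by
          intro k hk
          rw [hins k (mem_filter.1 hk).1, sum_insert (hfa k), add_comm]
        rw [hins j (mem_filter.1 hj).1, sum_insert (hfa j), hempty, sum_empty,
          zero_add, sum_congr rfl hrow3, sum_add_distrib, ← sum_mul]
      rw [hins i hi, sum_insert (hfa i), hempty, sum_empty, zero_add,
        sum_congr rfl hrow2, sum_add_distrib, ← sum_mul]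
    have key : ∑ i ∈ insert a s, ∑ j ∈ (insert a s).filter (i < ·),
          ∑ k ∈ (insert a s).filter (j < ·), ∑ l ∈ (insert a s).filter (k < ·),
            t i * t j * t k * t l
        = (∑ i ∈ s, ∑ j ∈ s.filter (i < ·), ∑ k ∈ s.filter (j < ·),
            ∑ l ∈ s.filter (k < ·), t i * t j * t k * t l)
          + (∑ i ∈ s, ∑ j ∈ s.filter (i < ·), ∑ k ∈ s.filter (j < ·), t i * t j * t k)
            * t a := by
      rw [sum_insert ha, hempty, sum_empty, zero_add, sum_congr rfl hrow1,
        sum_add_distrib, ← sum_mul]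
    obtain ⟨-, -, h4⟩ := two_el (t a) S (ht a) hSa.eq
    have hS3 : S ^ 3 = 6 • ∑ i ∈ s, ∑ j ∈ s.filter (i < ·),
        ∑ k ∈ s.filter (j < ·), t i * t j * t k := by
      rw [hS]; exact pow_three_aux t hc ht s
    rw [sum_insert ha, key, h4, ih, hS3, smul_mul_assoc, smul_smul, smul_add]
    norm_num

end helper

section app
variable {R M N : Type*} [CommRing R] [AddCommGroup M] [Module R M]
  [AddCommGroup N] [Module R N]
private lemma iota_mem_one (m : M) : ι R m ∈ ⋀[R]^1 M := by
  have h : (⋀[R]^1 M) = LinearMap.range (ι R : M →ₗ[R] ExteriorAlgebra R M) := pow_one _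
  rw [h]
  exact ⟨m, rfl⟩

private lemma tmul_mul_tmul_homog {j₁ i₂ : ℕ} (a₁ : ExteriorAlgebra R M)
    (b₁ : ExteriorAlgebra R N) (hb : b₁ ∈ ⋀[R]^j₁ N) (a₂ : ExteriorAlgebra R M)
    (ha : a₂ ∈ ⋀[R]^i₂ M) (b₂ : ExteriorAlgebra R N) :
    (a₁ ᵍ⊗ₜ[R] b₁) * (a₂ ᵍ⊗ₜ[R] b₂)
      = ((-1 : ℤˣ) ^ (j₁ * i₂)) •
        ((a₁ * a₂) ᵍ⊗ₜ[R] (b₁ * b₂) :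
          (fun i : ℕ ↦ ⋀[R]^i M) ᵍ⊗[R] (fun i : ℕ ↦ ⋀[R]^i N)) :=
  GradedTensorProduct.tmul_coe_mul_coe_tmul (R := R)
    (𝒜 := fun i : ℕ ↦ ⋀[R]^i M) (ℬ := fun i : ℕ ↦ ⋀[R]^i N)
    a₁ (⟨b₁, hb⟩ : ⋀[R]^j₁ N) (⟨a₂, ha⟩ : ⋀[R]^i₂ M) b₂

private lemma neg_tmul' (a : ExteriorAlgebra R M) (b : ExteriorAlgebra R N) :
    ((-a) ᵍ⊗ₜ[R] b : (fun i : ℕ ↦ ⋀[R]^i M) ᵍ⊗[R] (fun i : ℕ ↦ ⋀[R]^i N))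
      = -(a ᵍ⊗ₜ[R] b) := by
  exact congrArg (GradedTensorProduct.of R _ _) (TensorProduct.neg_tmul a b)

private lemma tmul_neg' (a : ExteriorAlgebra R M) (b : ExteriorAlgebra R N) :
    (a ᵍ⊗ₜ[R] (-b) : (fun i : ℕ ↦ ⋀[R]^i M) ᵍ⊗[R] (fun i : ℕ ↦ ⋀[R]^i N))
      = -(a ᵍ⊗ₜ[R] b) := by
  exact congrArg (GradedTensorProduct.of R _ _) (TensorProduct.tmul_neg a b)

private lemma zero_tmul' (b : ExteriorAlgebra R N) :
    ((0 : ExteriorAlgebra R M) ᵍ⊗ₜ[R] b :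
      (fun i : ℕ ↦ ⋀[R]^i M) ᵍ⊗[R] (fun i : ℕ ↦ ⋀[R]^i N)) = 0 := by
  exact congrArg (GradedTensorProduct.of R _ _) (TensorProduct.zero_tmul _ b)

end app

/-- In the Koszul-signed graded tensor product `Λ(M) ᵍ⊗ Λ(N)` of the exterior algebras of two
`R`-modules, the element `s = Σᵢ ι(xᵢ) ᵍ⊗ₜ ι(yᵢ)` satisfies
`s⁴ = 24 • Σ_{i<j<k<l} (ι(xᵢ)·ι(xⱼ)·ι(x_k)·ι(x_l)) ᵍ⊗ₜ (ι(yᵢ)·ι(yⱼ)·ι(y_k)·ι(y_l))`. -/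
theorem fourth_power_of_sum_tmul_iota {R M N : Type*} [CommRing R]
    [AddCommGroup M] [Module R M] [AddCommGroup N] [Module R N]
    (n : ℕ) (x : Fin n → M) (y : Fin n → N)
    (s : (fun i : ℕ ↦ ⋀[R]^i M) ᵍ⊗[R] (fun i : ℕ ↦ ⋀[R]^i N))
    (hs : s = ∑ i : Fin n, (ι R (x i)) ᵍ⊗ₜ[R] (ι R (y i))) :
    s ^ 4 = (24 : ℤ) •
      ∑ i : Fin n, ∑ j ∈ Finset.Ioi i, ∑ k ∈ Finset.Ioi j, ∑ l ∈ Finset.Ioi k,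
        ((ι R (x i) * ι R (x j) * ι R (x k) * ι R (x l)) ᵍ⊗ₜ[R]
          (ι R (y i) * ι R (y j) * ι R (y k) * ι R (y l))) := by
  subst hs
  set t : Fin n → (fun i : ℕ ↦ ⋀[R]^i M) ᵍ⊗[R] (fun i : ℕ ↦ ⋀[R]^i N) :=
    fun i => (ι R (x i)) ᵍ⊗ₜ[R] (ι R (y i)) with htdef
  have hmul : ∀ i j, t i * t j
      = -((ι R (x i) * ι R (x j)) ᵍ⊗ₜ[R] (ι R (y i) * ι R (y j))) := by
    intro i j
    rw [htdef]
    rw [tmul_mul_tmul_homog _ _ (iota_mem_one _) _ (iota_mem_one _) _]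
    simp [Units.smul_def]
  have hswapx : ∀ i j, ι R (x j) * ι R (x i) = -(ι R (x i) * ι R (x j)) :=
    fun i j => eq_neg_of_add_eq_zero_right (ι_add_mul_swap _ _)
  have hswapy : ∀ i j, ι R (y j) * ι R (y i) = -(ι R (y i) * ι R (y j)) :=
    fun i j => eq_neg_of_add_eq_zero_right (ι_add_mul_swap _ _)
  have hc : ∀ i j, Commute (t i) (t j) := by
    intro i j
    show t i * t j = t j * t i
    rw [hmul i j, hmul j i, hswapx i j, hswapy i j, neg_tmul', tmul_neg', neg_neg]
  have hsq : ∀ i, t i * t i = 0 := by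
    intro i
    rw [hmul i i, ι_sq_zero, zero_tmul', neg_zero]
  have hmem2x : ∀ i j, ι R (x i) * ι R (x j) ∈ ⋀[R]^2 M :=
    fun i j => SetLike.mul_mem_graded (iota_mem_one _) (iota_mem_one _)
  have hmem2y : ∀ i j, ι R (y i) * ι R (y j) ∈ ⋀[R]^2 N :=
    fun i j => SetLike.mul_mem_graded (iota_mem_one _) (iota_mem_one _)
  have hmem3y : ∀ i j k, ι R (y i) * ι R (y j) * ι R (y k) ∈ ⋀[R]^3 N :=
    fun i j k => SetLike.mul_mem_graded (hmem2y i j) (iota_mem_one _)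
  have h4 : ∀ i j k l, t i * t j * t k * t l
      = ((ι R (x i) * ι R (x j) * ι R (x k) * ι R (x l)) ᵍ⊗ₜ[R]
          (ι R (y i) * ι R (y j) * ι R (y k) * ι R (y l))) := by
    intro i j k l
    rw [hmul i j, neg_mul, htdef,
      tmul_mul_tmul_homog _ _ (hmem2y i j) _ (iota_mem_one _) _]
    rw [show ((-1 : ℤˣ) ^ (2 * 1) : ℤˣ) = 1 from Even.neg_one_pow (by decide), one_smul, neg_mul,
      tmul_mul_tmul_homog _ _ (hmem3y i j k) _ (iota_mem_one _) _]
    rw [show ((-1 : ℤˣ) ^ (3 * 1) : ℤˣ) = -1 from Odd.neg_one_pow (by decide)]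
    simp [Units.smul_def]
  have key := pow_four_aux t hc hsq Finset.univ
  rw [key]
  simp only [Finset.filter_lt_eq_Ioi, h4]
  rw [show ((24 : ℤ)) = ((24 : ℕ) : ℤ) by norm_num, natCast_zsmul]
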